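/- Let x, y ∈ Q for a cube Q in ℝ^n, let P be a concentric dilate of Q with ℓ(P) ≥ 10√n·l·ℓ(Q) (l ≥ 1), let 1 ≤ κ ≤ l−1, and let u_1,…,u_κ ∈ P and u_{κ+1},…,u_l ∈ P^c. Then |y−u_{κ+1}|+⋯+|y−u_l| ≳_{l,n} ℓ(P) + |x−u_1|+⋯+|x−u_l|. -/
import Mathlib


open Real

noncomputable section

/-- Axis-parallel cube in `ℝⁿ` with center `c` and side-length `ℓ`. -/
def cube {n : ℕ} (c : EuclideanSpace ℝ (Fin n)) (ℓ : ℝ) : Set (EuclideanSpace ℝ (Fin n)) :=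
  {y | ∀ i, |y i - c i| ≤ ℓ / 2}

lemma coord_le_norm' {n : ℕ} (v : EuclideanSpace ℝ (Fin n)) (i : Fin n) :
    |v i| ≤ ‖v‖ := by
  rw [EuclideanSpace.norm_eq]
  have h1 : |v i| = Real.sqrt (‖v i‖ ^ 2) := by
    rw [Real.sqrt_sq_eq_abs, Real.norm_eq_abs, abs_abs]
  rw [h1]
  exact Real.sqrt_le_sqrt (Finset.single_le_sum (f := fun j => ‖v j‖ ^ 2)
    (fun j _ => by positivity) (Finset.mem_univ i))

lemma norm_le_sqrt_mul' {n : ℕ} (v : EuclideanSpace ℝ (Fin n)) (r : ℝ) (hr : 0 ≤ r)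
    (h : ∀ i, |v i| ≤ r) : ‖v‖ ≤ Real.sqrt n * r := by
  rw [EuclideanSpace.norm_eq]
  have h2 : ∑ i, ‖v i‖ ^ 2 ≤ (n : ℝ) * r ^ 2 := by
    calc ∑ i, ‖v i‖ ^ 2 ≤ ∑ _i : Fin n, r ^ 2 := by
          refine Finset.sum_le_sum fun i _ => ?_
          have := h i
          rw [Real.norm_eq_abs]
          nlinarith [abs_nonneg (v i)]
      _ = (n : ℝ) * r ^ 2 := by simp [mul_comm]
  calc Real.sqrt (∑ i, ‖v i‖ ^ 2) ≤ Real.sqrt ((n:ℝ) * r ^ 2) := Real.sqrt_le_sqrt h2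
    _ = Real.sqrt n * r := by
        rw [Real.sqrt_mul (Nat.cast_nonneg n), Real.sqrt_sq hr]

/-- **Geometric off-diagonal estimate.** Let `Q` and `P` be concentric axis-parallel
cubes in `ℝⁿ` with `ℓ(P) ≥ 10√n·l·ℓ(Q)` (`l ≥ 1`), let `x, y ∈ Q`, `1 ≤ κ ≤ l−1`,
`u_1,…,u_κ ∈ P` and `u_{κ+1},…,u_l ∈ Pᶜ`. Then
`|y−u_{κ+1}|+⋯+|y−u_l| ≳_{l,n} ℓ(P) + |x−u_1|+⋯+|x−u_l|`. -/
theorem offdiagonal_cube_distance_estimate (n l : ℕ) (hl : 1 ≤ l) :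
    ∃ C > 0, ∀ (κ : ℕ), 1 ≤ κ → κ ≤ l - 1 →
      ∀ (c : EuclideanSpace ℝ (Fin n)) (ℓQ ℓP : ℝ), 0 < ℓQ →
        10 * Real.sqrt n * l * ℓQ ≤ ℓP →
        ∀ x y : EuclideanSpace ℝ (Fin n), x ∈ cube c ℓQ → y ∈ cube c ℓQ →
          ∀ u : Fin l → EuclideanSpace ℝ (Fin n),
            (∀ j : Fin l, (j : ℕ) < κ → u j ∈ cube c ℓP) →
            (∀ j : Fin l, κ ≤ (j : ℕ) → u j ∉ cube c ℓP) →
            C * (ℓP + ∑ j, ‖x - u j‖) ≤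
              ∑ j ∈ Finset.univ.filter (fun j : Fin l => κ ≤ (j : ℕ)), ‖y - u j‖ := by
  by_cases hn : n = 0
  · subst hn
    refine ⟨1, one_pos, ?_⟩
    intro κ hκ1 hκ2 c ℓQ ℓP hℓQ hℓP x y hx hy u hin hout
    exfalso
    have hκl : κ < l := by omega
    exact hout ⟨κ, hκl⟩ (le_refl _) (fun i => i.elim0)
  · have hn1 : (1:ℝ) ≤ Real.sqrt n := by
      rw [show (1:ℝ) = Real.sqrt 1 by simp]
      exact Real.sqrt_le_sqrt (by exact_mod_cast Nat.one_le_iff_ne_zero.mpr hn)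
    set sN := Real.sqrt n with hsN
    have hsN0 : 0 ≤ sN := Real.sqrt_nonneg _
    have hl' : (1:ℝ) ≤ (l:ℝ) := by exact_mod_cast hl
    refine ⟨1 / (3 * (l:ℝ) * (sN + 2) + 1), by positivity, ?_⟩
    intro κ hκ1 hκ2 c ℓQ ℓP hℓQ hℓP x y hx hy u hin hout
    have hκl : κ < l := by omega
    have hsNpos : 0 < sN := by linarith
    have hlpos : (0:ℝ) < (l:ℝ) := by linarith
    have hℓP0 : 0 < ℓP := by
      have h10 : 0 < 10 * sN * (l:ℝ) * ℓQ :=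
        mul_pos (mul_pos (mul_pos (by norm_num : (0:ℝ) < 10) hsNpos) hlpos) hℓQ
      linarith
    have hℓQP : sN * ℓQ ≤ ℓP / 10 := by nlinarith
    -- distances to center
    have hxc : ‖x - c‖ ≤ sN * (ℓQ / 2) :=
      norm_le_sqrt_mul' _ _ (by linarith) (fun i => hx i)
    have hyc : ‖y - c‖ ≤ sN * (ℓQ / 2) :=
      norm_le_sqrt_mul' _ _ (by linarith) (fun i => hy i)
    have hxy : ‖x - y‖ ≤ ℓP / 10 := by
      have h := norm_sub_le (x - c) (y - c)
      rw [sub_sub_sub_cancel_right] at h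
      nlinarith
    -- bound for inner points
    have hinner : ∀ j : Fin l, (j : ℕ) < κ → ‖x - u j‖ ≤ sN * ℓP := by
      intro j hj
      have h1 : ‖u j - c‖ ≤ sN * (ℓP / 2) :=
        norm_le_sqrt_mul' _ _ (by linarith) (fun i => hin j hj i)
      have h2 := norm_sub_le (x - c) (u j - c)
      rw [sub_sub_sub_cancel_right] at h2
      nlinarith
    -- outer points are far from center
    have houter : ∀ j : Fin l, κ ≤ (j : ℕ) → ℓP / 2 ≤ ‖u j - c‖ := by
      intro j hj
      have := hout j hj
      simp only [cube, Set.mem_setOf_eq, not_forall, not_le] at this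
      obtain ⟨i, hi⟩ := this
      have h2 : |(u j - c) i| ≤ ‖u j - c‖ := coord_le_norm' _ i
      have h3 : (u j - c) i = u j i - c i := rfl
      rw [h3] at h2
      linarith
    set S := ∑ j ∈ Finset.univ.filter (fun j : Fin l => κ ≤ (j : ℕ)), ‖y - u j‖ with hSdef
    have hS0 : 0 ≤ S := Finset.sum_nonneg fun j _ => norm_nonneg _
    -- the single outer point gives ℓP ≲ S
    have hj0mem : (⟨κ, hκl⟩ : Fin l) ∈ Finset.univ.filter (fun j : Fin l => κ ≤ (j : ℕ)) := by
      simp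
    have hy0 : 9 / 20 * ℓP ≤ ‖y - u ⟨κ, hκl⟩‖ := by
      have h1 := houter ⟨κ, hκl⟩ (le_refl _)
      have h2 := norm_sub_le (u ⟨κ, hκl⟩ - y) (c - y)
      have h3 : u ⟨κ, hκl⟩ - y - (c - y) = u ⟨κ, hκl⟩ - c := by abel
      rw [h3] at h2
      have h4 : ‖u ⟨κ, hκl⟩ - y‖ = ‖y - u ⟨κ, hκl⟩‖ := norm_sub_rev _ _
      have h5 : ‖c - y‖ = ‖y - c‖ := norm_sub_rev _ _
      nlinarith
    have hℓPS : ℓP ≤ 20 / 9 * S := by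
      have := Finset.single_le_sum (f := fun j : Fin l => ‖y - u j‖)
        (fun j _ => norm_nonneg _) hj0mem
      rw [← hSdef] at this
      linarith
    -- split the total sum
    have hsplit := Finset.sum_filter_add_sum_filter_not Finset.univ
      (fun j : Fin l => κ ≤ (j : ℕ)) (fun j => ‖x - u j‖)
    have hpart1 : ∑ j ∈ Finset.univ.filter (fun j : Fin l => ¬ κ ≤ (j : ℕ)), ‖x - u j‖
        ≤ (l : ℝ) * (sN * ℓP) := by
      calc ∑ j ∈ Finset.univ.filter (fun j : Fin l => ¬ κ ≤ (j : ℕ)), ‖x - u j‖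
          ≤ ∑ _j ∈ Finset.univ.filter (fun j : Fin l => ¬ κ ≤ (j : ℕ)), sN * ℓP :=
            Finset.sum_le_sum fun j hj => by
              have hj' : (j : ℕ) < κ := by
                simp only [Finset.mem_filter, not_le] at hj; exact hj.2
              exact hinner j hj'
        _ = ((Finset.univ.filter (fun j : Fin l => ¬ κ ≤ (j : ℕ))).card : ℝ) * (sN * ℓP) := by
            rw [Finset.sum_const, nsmul_eq_mul]
        _ ≤ (l : ℝ) * (sN * ℓP) := by
            have hcard : (Finset.univ.filter (fun j : Fin l => ¬ κ ≤ (j : ℕ))).card ≤ l := by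
              calc _ ≤ (Finset.univ : Finset (Fin l)).card := Finset.card_filter_le _ _
                _ = l := by simp
            have : ((Finset.univ.filter (fun j : Fin l => ¬ κ ≤ (j : ℕ))).card : ℝ) ≤ (l:ℝ) := by
              exact_mod_cast hcard
            exact mul_le_mul_of_nonneg_right this (mul_nonneg hsN0 hℓP0.le)
    have hpart2 : ∑ j ∈ Finset.univ.filter (fun j : Fin l => κ ≤ (j : ℕ)), ‖x - u j‖
        ≤ S + (l : ℝ) * (ℓP / 10) := by
      calc ∑ j ∈ Finset.univ.filter (fun j : Fin l => κ ≤ (j : ℕ)), ‖x - u j‖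
          ≤ ∑ j ∈ Finset.univ.filter (fun j : Fin l => κ ≤ (j : ℕ)), (‖y - u j‖ + ℓP / 10) :=
            Finset.sum_le_sum fun j _ => by
              have h2 := norm_sub_le (x - y) (u j - y)
              have h3 : x - y - (u j - y) = x - u j := by abel
              rw [h3] at h2
              have h4 : ‖u j - y‖ = ‖y - u j‖ := norm_sub_rev _ _
              linarith
        _ = S + ((Finset.univ.filter (fun j : Fin l => κ ≤ (j : ℕ))).card : ℝ) * (ℓP / 10) := by
            rw [Finset.sum_add_distrib, Finset.sum_const, nsmul_eq_mul, hSdef]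
        _ ≤ S + (l : ℝ) * (ℓP / 10) := by
            have hcard : (Finset.univ.filter (fun j : Fin l => κ ≤ (j : ℕ))).card ≤ l := by
              calc _ ≤ (Finset.univ : Finset (Fin l)).card := Finset.card_filter_le _ _
                _ = l := by simp
            have : ((Finset.univ.filter (fun j : Fin l => κ ≤ (j : ℕ))).card : ℝ) ≤ (l:ℝ) := by
              exact_mod_cast hcard
            have h6 := mul_le_mul_of_nonneg_right this (by linarith : (0:ℝ) ≤ ℓP / 10)
            linarith
    clear_value S
    have htot : ℓP + ∑ j, ‖x - u j‖ ≤ (3 * (l:ℝ) * (sN + 2) + 1) * S := by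
      have hsum : ∑ j, ‖x - u j‖
          ≤ S + (l : ℝ) * (ℓP / 10) + (l : ℝ) * (sN * ℓP) := by
        rw [← hsplit]; linarith
      -- key scalar inequality
      have hkey : ℓP * (1 + (l:ℝ) * sN + (l:ℝ) / 10) ≤ 3 * (l:ℝ) * (sN + 2) * S := by
        have hfac : 0 ≤ 1 + (l:ℝ) * sN + (l:ℝ) / 10 := by positivity
        have h5 : ℓP * (1 + (l:ℝ) * sN + (l:ℝ) / 10)
            ≤ (20 / 9 * S) * (1 + (l:ℝ) * sN + (l:ℝ) / 10) :=
          mul_le_mul_of_nonneg_right hℓPS hfac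
        have hls : (1:ℝ) * 1 ≤ (l:ℝ) * sN := mul_le_mul hl' hn1 zero_le_one (by linarith)
        have hscalar : 20 / 9 * (1 + (l:ℝ) * sN + (l:ℝ) / 10) ≤ 3 * (l:ℝ) * (sN + 2) := by
          linarith
        have h6 := mul_le_mul_of_nonneg_right hscalar hS0
        linarith
      linarith
    have hK : 0 < 3 * (l:ℝ) * (sN + 2) + 1 := by positivity
    calc 1 / (3 * (l:ℝ) * (sN + 2) + 1) * (ℓP + ∑ j, ‖x - u j‖)
        ≤ 1 / (3 * (l:ℝ) * (sN + 2) + 1) * ((3 * (l:ℝ) * (sN + 2) + 1) * S) := by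
          apply mul_le_mul_of_nonneg_left htot (by positivity)
      _ = S := by
          rw [← mul_assoc, one_div_mul_cancel (ne_of_gt hK), one_mul]
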